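/- Let f₁, f₂ : X → ℝ be functions taking values in a bounded set Ω, let ζ : ℝ → ℝ be continuously differentiable with bounded derivative, and set θ_i = ζ ∘ f_i. Suppose the conditional densities π_{f_i}(y|x) belong to a one-parameter canonical exponential family with canonical parameter θ_i(x), whose log-partition function J is C² with J'' bounded on ζ(Ω). Then there exists a constant C(Ω) such that for the joint densities π_{f_i}(x,y) = π_{f_i}(y|x)g(x), KL(π_{f₁}; π_{f₂}) ≤ C(Ω)·‖f₁ − f₂‖_∞². -/

import Mathlib

open MeasureTheory Real

private lemma taylor_upper_aux {a b : ℝ} {K : Set ℝ} (hK : Convex ℝ K) (hKab : K ⊆ Set.Ioo a b)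
    {J : ℝ → ℝ} (hJC2 : ContDiffOn ℝ 2 J (Set.Ioo a b)) {L : ℝ}
    (hL : ∀ u ∈ K, deriv (deriv J) u ≤ L)
    {θ₁ θ₂ : ℝ} (h1 : θ₁ ∈ K) (h2 : θ₂ ∈ K) :
    J θ₂ - J θ₁ - (θ₂ - θ₁) * deriv J θ₁ ≤ L / 2 * (θ₂ - θ₁) ^ 2 := by
  have hO : IsOpen (Set.Ioo a b) := isOpen_Ioo
  have hJ1 : ContDiffOn ℝ 1 (deriv J) (Set.Ioo a b) := hJC2.deriv_of_isOpen hO (by norm_num)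
  have hJdiff : ∀ t ∈ Set.Ioo a b, HasDerivAt J (deriv J t) t := fun t ht =>
    ((hJC2.contDiffAt (hO.mem_nhds ht)).differentiableAt (by norm_num)).hasDerivAt
  have hJ'diff : ∀ t ∈ Set.Ioo a b, HasDerivAt (deriv J) (deriv (deriv J) t) t := fun t ht =>
    ((hJ1.contDiffAt (hO.mem_nhds ht)).differentiableAt one_ne_zero).hasDerivAt
  set φ : ℝ → ℝ := fun t => deriv J θ₁ + L * (t - θ₁) - deriv J t with hφ
  have hφd : ∀ t ∈ Set.Ioo a b, HasDerivAt φ (L - deriv (deriv J) t) t := by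
    intro t ht
    have hA : HasDerivAt (fun t : ℝ => deriv J θ₁ + L * (t - θ₁)) L t := by
      exact ((hasDerivAt_const t (deriv J θ₁)).add
        (((hasDerivAt_id t).sub_const θ₁).const_mul L)).congr_deriv (by ring)
    exact hA.sub (hJ'diff t ht)
  have hφmono : MonotoneOn φ K := by
    apply monotoneOn_of_deriv_nonneg hK
    · apply ContinuousOn.sub
      · exact (continuous_const.add (continuous_const.mul (continuous_sub_right θ₁))).continuousOn
      · exact (hJ1.continuousOn).mono hKab
    · intro t ht
      exact ((hφd t (hKab (interior_subset ht))).differentiableAt).differentiableWithinAt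
    · intro t ht
      rw [(hφd t (hKab (interior_subset ht))).deriv]
      have := hL t (interior_subset ht)
      linarith
  have hφ1 : φ θ₁ = 0 := by simp [hφ]
  set g : ℝ → ℝ := fun t => J θ₁ + (t - θ₁) * deriv J θ₁ + L / 2 * (t - θ₁) ^ 2 - J t with hg
  have hgd : ∀ t ∈ Set.Ioo a b, HasDerivAt g (φ t) t := by
    intro t ht
    have hA : HasDerivAt (fun t : ℝ => J θ₁ + (t - θ₁) * deriv J θ₁ + L / 2 * (t - θ₁) ^ 2)
        (deriv J θ₁ + L * (t - θ₁)) t := by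
      have ha : HasDerivAt (fun t : ℝ => (t - θ₁) * deriv J θ₁) (deriv J θ₁) t := by
        simpa using ((hasDerivAt_id t).sub_const θ₁).mul_const (deriv J θ₁)
      have hb : HasDerivAt (fun t : ℝ => L / 2 * (t - θ₁) ^ 2) (L * (t - θ₁)) t := by
        have hc : HasDerivAt (fun t : ℝ => (t - θ₁) ^ 2) (2 * (t - θ₁)) t := by
          exact (((hasDerivAt_id t).sub_const θ₁).pow 2).congr_deriv (by norm_num)
        have := hc.const_mul (L / 2)
        exact this.congr_deriv (by ring)
      exact (((hasDerivAt_const t (J θ₁)).add ha).add hb).congr_deriv (by ring)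
    have := hA.sub (hJdiff t ht)
    exact this
  have key : g θ₁ ≤ g θ₂ := by
    rcases le_total θ₁ θ₂ with hle | hle
    · have hsub : Set.Icc θ₁ θ₂ ⊆ K := hK.ordConnected.out h1 h2
      have hm : MonotoneOn g (Set.Icc θ₁ θ₂) := by
        apply monotoneOn_of_deriv_nonneg (convex_Icc _ _)
        · intro t ht
          exact ((hgd t (hKab (hsub ht))).continuousAt).continuousWithinAt
        · intro t ht
          rw [interior_Icc] at ht
          exact ((hgd t (hKab (hsub (Set.Ioo_subset_Icc_self ht)))).differentiableAt).differentiableWithinAt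
        · intro t ht
          rw [interior_Icc] at ht
          have htK : t ∈ K := hsub (Set.Ioo_subset_Icc_self ht)
          rw [(hgd t (hKab htK)).deriv]
          have := hφmono h1 htK (le_of_lt ht.1)
          rw [hφ1] at this; exact this
      exact hm (Set.left_mem_Icc.2 hle) (Set.right_mem_Icc.2 hle) hle
    · have hsub : Set.Icc θ₂ θ₁ ⊆ K := hK.ordConnected.out h2 h1
      have hm : AntitoneOn g (Set.Icc θ₂ θ₁) := by
        apply antitoneOn_of_deriv_nonpos (convex_Icc _ _)
        · intro t ht
          exact ((hgd t (hKab (hsub ht))).continuousAt).continuousWithinAt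
        · intro t ht
          rw [interior_Icc] at ht
          exact ((hgd t (hKab (hsub (Set.Ioo_subset_Icc_self ht)))).differentiableAt).differentiableWithinAt
        · intro t ht
          rw [interior_Icc] at ht
          have htK : t ∈ K := hsub (Set.Ioo_subset_Icc_self ht)
          rw [(hgd t (hKab htK)).deriv]
          have := hφmono htK h1 (le_of_lt ht.2)
          rw [hφ1] at this; exact this
      exact hm (Set.left_mem_Icc.2 hle) (Set.right_mem_Icc.2 hle) hle
  have hg1 : g θ₁ = 0 := by simp [hg]
  rw [hg1] at key
  simp only [hg] at key
  linarith [key]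

private lemma integral_le_of_forall_le' {X : Type*} [MeasurableSpace X] (ν : Measure X)
    [IsProbabilityMeasure ν] {G : X → ℝ} {B : ℝ} (hB : 0 ≤ B) (hG : ∀ x, G x ≤ B) :
    ∫ x, G x ∂ν ≤ B := by
  by_cases hGi : Integrable G ν
  · calc ∫ x, G x ∂ν ≤ ∫ _, B ∂ν := integral_mono hGi (integrable_const B) hG
      _ = B := by simp
  · rw [integral_undef hGi]; exact hB

/-- For latent functions `f₁, f₂ : X → ℝ` taking values in a bounded set `Ω`,
`ζ` continuously differentiable with bounded derivative, conditional densities of a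
one-parameter canonical exponential family with canonical parameters `θᵢ = ζ ∘ fᵢ` and
log-partition function `J` (C², with `J''` bounded on `ζ(Ω)`), there exists a constant
`C(Ω)` such that the joint KL divergence satisfies `KL(π_{f₁}; π_{f₂}) ≤ C(Ω) ‖f₁ - f₂‖_∞²`. -/
theorem kl_bound_by_sup_norm
    {X : Type*} [MeasurableSpace X] (ν : Measure X) [IsProbabilityMeasure ν]
    {Y : Type*} [MeasurableSpace Y] (μ : Measure Y)
    (h κ : Y → ℝ) (hh : ∀ y, 0 < h y)
    (Ω : Set ℝ) (hΩ : Bornology.IsBounded Ω)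
    (ζ : ℝ → ℝ) (hζ : ContDiff ℝ 1 ζ) (Bζ : ℝ) (hζ' : ∀ u, |deriv ζ u| ≤ Bζ)
    (a b : ℝ) (J : ℝ → ℝ)
    (hab : convexHull ℝ (ζ '' Ω) ⊆ Set.Ioo a b)
    (hint : ∀ θ ∈ Set.Ioo a b, Integrable (fun y => h y * exp (θ * κ y)) μ)
    (hJ : ∀ θ ∈ Set.Ioo a b, J θ = log (∫ y, h y * exp (θ * κ y) ∂μ))
    (hJC2 : ContDiffOn ℝ 2 J (Set.Ioo a b))
    (LJ : ℝ) (hJ2 : ∀ u ∈ convexHull ℝ (ζ '' Ω), deriv (deriv J) u ≤ LJ)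
    (hκint : ∀ θ ∈ Set.Ioo a b,
      Integrable (fun y => κ y * (h y * exp (θ * κ y - J θ))) μ) :
    ∃ C : ℝ, 0 < C ∧
      ∀ f₁ f₂ : X → ℝ, Measurable f₁ → Measurable f₂ →
        (∀ x, f₁ x ∈ Ω) → (∀ x, f₂ x ∈ Ω) →
        (∫ x, (∫ y, (h y * exp (ζ (f₁ x) * κ y - J (ζ (f₁ x)))) *
              log ((h y * exp (ζ (f₁ x) * κ y - J (ζ (f₁ x)))) /
                   (h y * exp (ζ (f₂ x) * κ y - J (ζ (f₂ x))))) ∂μ) ∂ν) ≤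
          C * (⨆ x, |f₁ x - f₂ x|) ^ 2 := by
  classical
  have hKconv : Convex ℝ (convexHull ℝ (ζ '' Ω)) := convex_convexHull ℝ _
  have hBζ0 : 0 ≤ Bζ := le_trans (abs_nonneg _) (hζ' 0)
  set L : ℝ := max LJ 0 with hLdef
  have hL0 : 0 ≤ L := le_max_right _ _
  have hL : ∀ u ∈ convexHull ℝ (ζ '' Ω), deriv (deriv J) u ≤ L := fun u hu =>
    le_trans (hJ2 u hu) (le_max_left _ _)
  refine ⟨L / 2 * Bζ ^ 2 + 1, by positivity, ?_⟩
  intro f₁ f₂ _ _ hf₁ hf₂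
  set S : ℝ := ⨆ x, |f₁ x - f₂ x| with hSdef
  by_cases hμ : μ = 0
  · simp only [hμ, integral_zero_measure]
    simp only [integral_zero]
    positivity
  -- μ ≠ 0
  have hζlip : ∀ u v : ℝ, |ζ u - ζ v| ≤ Bζ * |u - v| := by
    intro u v
    have := convex_univ.norm_image_sub_le_of_norm_deriv_le (f := ζ)
      (fun t _ => (hζ.differentiable one_ne_zero).differentiableAt)
      (fun t _ => by rw [Real.norm_eq_abs]; exact hζ' t) (Set.mem_univ v) (Set.mem_univ u)
    simpa [Real.norm_eq_abs] using this
  have hSbd : BddAbove (Set.range fun x => |f₁ x - f₂ x|) := by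
    obtain ⟨R, hR⟩ := isBounded_iff_forall_norm_le.mp hΩ
    refine ⟨R + R, ?_⟩
    rintro _ ⟨x, rfl⟩
    have h1 := hR _ (hf₁ x)
    have h2 := hR _ (hf₂ x)
    rw [Real.norm_eq_abs] at h1 h2
    calc |f₁ x - f₂ x| ≤ |f₁ x| + |f₂ x| := abs_sub _ _
      _ ≤ R + R := add_le_add h1 h2
  have hdS : ∀ x, |f₁ x - f₂ x| ≤ S := fun x => le_ciSup hSbd x
  have hZpos : ∀ θ ∈ Set.Ioo a b, 0 < ∫ y, h y * exp (θ * κ y) ∂μ := by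
    intro θ hθ
    rw [integral_pos_iff_support_of_nonneg
      (fun y => (mul_pos (hh y) (exp_pos _)).le) (hint θ hθ)]
    have hsupp : (Function.support fun y => h y * exp (θ * κ y)) = Set.univ := by
      ext y
      simp only [Function.mem_support, Set.mem_univ, iff_true]
      exact mul_ne_zero (hh y).ne' (exp_pos (θ * κ y)).ne'
    rw [hsupp]
    exact Measure.measure_univ_pos.mpr hμ
  have hsplit : ∀ θ : ℝ, (fun y => h y * exp (θ * κ y - J θ))
      = fun y => h y * exp (θ * κ y) * exp (-J θ) := by
    intro θ; funext y
    rw [mul_assoc, ← Real.exp_add]; ring_nf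
  have hpint : ∀ θ ∈ Set.Ioo a b, Integrable (fun y => h y * exp (θ * κ y - J θ)) μ := by
    intro θ hθ
    rw [hsplit θ]
    exact (hint θ hθ).mul_const _
  have hnorm : ∀ θ ∈ Set.Ioo a b, ∫ y, h y * exp (θ * κ y - J θ) ∂μ = 1 := by
    intro θ hθ
    rw [hsplit θ, integral_mul_const, hJ θ hθ, Real.exp_neg, Real.exp_log (hZpos θ hθ)]
    exact mul_inv_cancel₀ (hZpos θ hθ).ne'
  have hKL : ∀ θ₁ ∈ Set.Ioo a b, ∀ θ₂ ∈ Set.Ioo a b,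
      (∫ y, (h y * exp (θ₁ * κ y - J θ₁)) *
        log ((h y * exp (θ₁ * κ y - J θ₁)) / (h y * exp (θ₂ * κ y - J θ₂))) ∂μ)
      = (θ₁ - θ₂) * (∫ y, κ y * (h y * exp (θ₁ * κ y - J θ₁)) ∂μ) - (J θ₁ - J θ₂) := by
    intro θ₁ h₁ θ₂ h₂
    have heq : (fun y => (h y * exp (θ₁ * κ y - J θ₁)) *
        log ((h y * exp (θ₁ * κ y - J θ₁)) / (h y * exp (θ₂ * κ y - J θ₂))))
        = fun y => (θ₁ - θ₂) * (κ y * (h y * exp (θ₁ * κ y - J θ₁)))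
            - (J θ₁ - J θ₂) * (h y * exp (θ₁ * κ y - J θ₁)) := by
      funext y
      have hlog : log ((h y * exp (θ₁ * κ y - J θ₁)) / (h y * exp (θ₂ * κ y - J θ₂)))
          = (θ₁ - θ₂) * κ y - (J θ₁ - J θ₂) := by
        rw [mul_div_mul_left _ _ (hh y).ne', ← Real.exp_sub, Real.log_exp]; ring
      rw [hlog]; ring
    rw [heq, integral_sub ((hκint θ₁ h₁).const_mul _) ((hpint θ₁ h₁).const_mul _),
      integral_const_mul, integral_const_mul, hnorm θ₁ h₁, mul_one]
  have hGibbs : ∀ θ₁ ∈ Set.Ioo a b, ∀ θ₂ ∈ Set.Ioo a b,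
      0 ≤ (θ₁ - θ₂) * (∫ y, κ y * (h y * exp (θ₁ * κ y - J θ₁)) ∂μ) - (J θ₁ - J θ₂) := by
    intro θ₁ hθ₁ θ₂ hθ₂
    have hptw : ∀ y, (θ₂ - θ₁) * (κ y * (h y * exp (θ₁ * κ y - J θ₁)))
        - (J θ₂ - J θ₁) * (h y * exp (θ₁ * κ y - J θ₁))
        ≤ h y * exp (θ₂ * κ y - J θ₂) - h y * exp (θ₁ * κ y - J θ₁) := by
      intro y
      have hp₁ : 0 < h y * exp (θ₁ * κ y - J θ₁) := mul_pos (hh y) (exp_pos _)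
      have h1 : ((θ₂ - θ₁) * κ y - (J θ₂ - J θ₁))
          ≤ exp ((θ₂ - θ₁) * κ y - (J θ₂ - J θ₁)) - 1 := by
        have := Real.add_one_le_exp ((θ₂ - θ₁) * κ y - (J θ₂ - J θ₁))
        linarith
      have h2 := mul_le_mul_of_nonneg_left h1 hp₁.le
      have h3 : (h y * exp (θ₁ * κ y - J θ₁)) * exp ((θ₂ - θ₁) * κ y - (J θ₂ - J θ₁))
          = h y * exp (θ₂ * κ y - J θ₂) := by
        rw [mul_assoc, ← Real.exp_add]; ring_nf
      nlinarith [h2, h3]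
    have hi1 : Integrable (fun y => (θ₂ - θ₁) * (κ y * (h y * exp (θ₁ * κ y - J θ₁)))
        - (J θ₂ - J θ₁) * (h y * exp (θ₁ * κ y - J θ₁))) μ :=
      ((hκint θ₁ hθ₁).const_mul _).sub ((hpint θ₁ hθ₁).const_mul _)
    have hi2 : Integrable (fun y => h y * exp (θ₂ * κ y - J θ₂)
        - h y * exp (θ₁ * κ y - J θ₁)) μ := (hpint θ₂ hθ₂).sub (hpint θ₁ hθ₁)
    have hIm := integral_mono hi1 hi2 hptw
    rw [integral_sub ((hκint θ₁ hθ₁).const_mul _) ((hpint θ₁ hθ₁).const_mul _),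
      integral_sub (hpint θ₂ hθ₂) (hpint θ₁ hθ₁), integral_const_mul, integral_const_mul,
      hnorm θ₁ hθ₁, hnorm θ₂ hθ₂, mul_one] at hIm
    linarith
  have hJdiff : ∀ t ∈ Set.Ioo a b, HasDerivAt J (deriv J t) t := fun t ht =>
    ((hJC2.contDiffAt (isOpen_Ioo.mem_nhds ht)).differentiableAt (by norm_num)).hasDerivAt
  have hM : ∀ θ₁ ∈ Set.Ioo a b,
      (∫ y, κ y * (h y * exp (θ₁ * κ y - J θ₁)) ∂μ) = deriv J θ₁ := by
    intro θ₁ hθ₁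
    set m : ℝ := ∫ y, κ y * (h y * exp (θ₁ * κ y - J θ₁)) ∂μ with hm
    have hGd : HasDerivAt (fun t => (θ₁ - t) * m - (J θ₁ - J t)) (-m + deriv J θ₁) θ₁ := by
      have hA : HasDerivAt (fun t : ℝ => (θ₁ - t) * m) (-m) θ₁ := by
        simpa using ((hasDerivAt_id θ₁).const_sub θ₁).mul_const m
      have hB : HasDerivAt (fun t : ℝ => J θ₁ - J t) (-(deriv J θ₁)) θ₁ := by
        simpa using (hJdiff θ₁ hθ₁).const_sub (J θ₁)
      have := hA.sub hB; rw [sub_neg_eq_add] at this; exact this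
    have hmin : IsLocalMin (fun t => (θ₁ - t) * m - (J θ₁ - J t)) θ₁ := by
      refine Filter.eventually_of_mem (isOpen_Ioo.mem_nhds hθ₁) (fun t ht => ?_)
      have h0 : (θ₁ - θ₁) * m - (J θ₁ - J θ₁) = 0 := by ring
      simp only [h0]
      exact hGibbs θ₁ hθ₁ t ht
    have := hmin.hasDerivAt_eq_zero hGd
    linarith
  -- pointwise bound over x
  have hB0 : 0 ≤ L / 2 * Bζ ^ 2 * S ^ 2 := by positivity
  have hptx : ∀ x, (∫ y, (h y * exp (ζ (f₁ x) * κ y - J (ζ (f₁ x)))) *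
        log ((h y * exp (ζ (f₁ x) * κ y - J (ζ (f₁ x)))) /
             (h y * exp (ζ (f₂ x) * κ y - J (ζ (f₂ x))))) ∂μ)
      ≤ L / 2 * Bζ ^ 2 * S ^ 2 := by
    intro x
    have hθ₁K : ζ (f₁ x) ∈ convexHull ℝ (ζ '' Ω) :=
      subset_convexHull ℝ _ (Set.mem_image_of_mem ζ (hf₁ x))
    have hθ₂K : ζ (f₂ x) ∈ convexHull ℝ (ζ '' Ω) :=
      subset_convexHull ℝ _ (Set.mem_image_of_mem ζ (hf₂ x))
    have hθ₁ : ζ (f₁ x) ∈ Set.Ioo a b := hab hθ₁K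
    have hθ₂ : ζ (f₂ x) ∈ Set.Ioo a b := hab hθ₂K
    rw [hKL _ hθ₁ _ hθ₂, hM _ hθ₁]
    have htay := taylor_upper_aux hKconv hab hJC2 hL hθ₁K hθ₂K
    have hsq : (ζ (f₂ x) - ζ (f₁ x)) ^ 2 ≤ Bζ ^ 2 * S ^ 2 := by
      have h1 : |ζ (f₂ x) - ζ (f₁ x)| ≤ Bζ * S := by
        calc |ζ (f₂ x) - ζ (f₁ x)| ≤ Bζ * |f₂ x - f₁ x| := hζlip _ _
          _ ≤ Bζ * S := by
            rw [abs_sub_comm]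
            exact mul_le_mul_of_nonneg_left (hdS x) hBζ0
      calc (ζ (f₂ x) - ζ (f₁ x)) ^ 2 = |ζ (f₂ x) - ζ (f₁ x)| ^ 2 := (sq_abs _).symm
        _ ≤ (Bζ * S) ^ 2 := pow_le_pow_left₀ (abs_nonneg _) h1 2
        _ = Bζ ^ 2 * S ^ 2 := by ring
    have hstep : L / 2 * (ζ (f₂ x) - ζ (f₁ x)) ^ 2 ≤ L / 2 * (Bζ ^ 2 * S ^ 2) :=
      mul_le_mul_of_nonneg_left hsq (by positivity)
    linarith
  calc (∫ x, (∫ y, (h y * exp (ζ (f₁ x) * κ y - J (ζ (f₁ x)))) *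
          log ((h y * exp (ζ (f₁ x) * κ y - J (ζ (f₁ x)))) /
               (h y * exp (ζ (f₂ x) * κ y - J (ζ (f₂ x))))) ∂μ) ∂ν)
      ≤ L / 2 * Bζ ^ 2 * S ^ 2 := integral_le_of_forall_le' ν hB0 hptx
    _ ≤ (L / 2 * Bζ ^ 2 + 1) * S ^ 2 := by nlinarith [sq_nonneg S]
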